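/- For every k ≥ 2, the language k-Shuffle Dyck is not context-free. -/

import Mathlib

namespace CFP
universe uT uN
variable {T : Type uT}

inductive PT (T : Type uT) (N : Type uN) : Type (max uT uN)
  | leaf (s : Symbol T N) : PT T N
  | node (n : N) (c : List (PT T N)) : PT T N

namespace PT
variable {N : Type uN}

def root : PT T N → Symbol T N
  | .leaf s => s
  | .node n _ => .nonterminal n

mutual
def yield : PT T N → List (Symbol T N)
  | .leaf s => [s]
  | .node _ c => yields c
def yields : List (PT T N) → List (Symbol T N)
  | [] => []
  | t :: ts => yield t ++ yields ts
end

mutual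
def height : PT T N → ℕ
  | .leaf _ => 0
  | .node _ c => heights c + 1
def heights : List (PT T N) → ℕ
  | [] => 0
  | t :: ts => max (height t) (heights ts)
end

mutual
def size : PT T N → ℕ
  | .leaf _ => 1
  | .node _ c => sizes c + 1
def sizes : List (PT T N) → ℕ
  | [] => 0
  | t :: ts => size t + sizes ts
end

lemma yields_append (l₁ l₂ : List (PT T N)) :
    yields (l₁ ++ l₂) = yields l₁ ++ yields l₂ := by
  induction l₁ with
  | nil => rfl
  | cons t ts ih => simp [yields, ih]

lemma sizes_append (l₁ l₂ : List (PT T N)) :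
    sizes (l₁ ++ l₂) = sizes l₁ + sizes l₂ := by
  induction l₁ with
  | nil => simp [sizes]
  | cons t ts ih => simp [sizes, ih]; ring

lemma height_le_heights {t : PT T N} {c : List (PT T N)} (h : t ∈ c) :
    height t ≤ heights c := by
  induction c with
  | nil => cases h
  | cons u us ih =>
    rcases List.mem_cons.mp h with rfl | h
    · exact le_max_left _ _
    · exact le_trans (ih h) (le_max_right _ _)

lemma exists_heights (c : List (PT T N)) :
    heights c = 0 ∨ ∃ t ∈ c, height t = heights c := by
  induction c with
  | nil => exact Or.inl rfl
  | cons u us ih =>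
    rcases max_choice (height u) (heights us) with h | h
    · exact Or.inr ⟨u, List.mem_cons_self, h.symm⟩
    · rcases ih with h0 | ⟨t, ht, hh⟩
      · left; rw [heights, h, h0]
      · exact Or.inr ⟨t, List.mem_cons_of_mem _ ht, by rw [heights, h, hh]⟩

end PT

open PT

variable {g : ContextFreeGrammar.{uT} T}

/-- Well-formed parse trees w.r.t. a grammar. A leaf may carry any symbol
(an unexpanded nonterminal or a terminal). -/
inductive WF (g : ContextFreeGrammar.{uT} T) : PT T g.NT → Prop
  | leaf (s : Symbol T g.NT) : WF g (.leaf s)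
  | node (r : ContextFreeRule T g.NT) (hr : r ∈ g.rules) (c : List (PT T g.NT))
      (hc : c.map root = r.output) (hwf : ∀ t ∈ c, WF g t) : WF g (.node r.input c)

lemma derives_yields (f : List (PT T g.NT))
    (h : ∀ t ∈ f, g.Derives [root t] (yield t)) :
    g.Derives (f.map root) (yields f) := by
  induction f with
  | nil => exact ContextFreeGrammar.Derives.refl []
  | cons t ts ih =>
    have h1 : g.Derives ([root t] ++ ts.map root) (yield t ++ ts.map root) :=
      ContextFreeGrammar.Derives.append_right (h t (by simp)) _
    have h2 : g.Derives (yield t ++ ts.map root) (yield t ++ yields ts) :=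
      ContextFreeGrammar.Derives.append_left (ih (fun u hu => h u (by simp [hu]))) _
    simpa [yields] using h1.trans h2

lemma WF.derives {t : PT T g.NT} (h : WF g t) : g.Derives [root t] (yield t) := by
  induction h with
  | leaf s => rfl
  | node r hr c hc hwf ih =>
    have step : g.Produces [Symbol.nonterminal r.input] r.output :=
      ⟨r, hr, ContextFreeRule.Rewrites.input_output⟩
    have : g.Derives (c.map root) (yields c) := derives_yields c ih
    rw [← hc] at step
    exact (step.trans_derives this : _)

/-- From a derivation, get a well-formed forest. -/
lemma exists_forest {u v : List (Symbol T g.NT)} (h : g.Derives u v) :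
    ∃ f : List (PT T g.NT), f.map root = u ∧ (∀ t ∈ f, WF g t) ∧ yields f = v := by
  induction h using Relation.ReflTransGen.head_induction_on with
  | refl =>
    refine ⟨v.map PT.leaf, by simp [root, Function.comp]; exact List.map_id'' (fun s => rfl) v, fun t ht => ?_, ?_⟩
    · rcases List.mem_map.mp ht with ⟨s, _, rfl⟩; exact WF.leaf s
    · induction v with
      | nil => rfl
      | cons s ss ih => simpa [yields, yield] using ih
  | head hp _ ih =>
    rcases ih with ⟨f, hroot, hwf, hyield⟩
    rcases hp with ⟨r, hr, hrw⟩
    rcases hrw.exists_parts with ⟨p, q, rfl, rfl⟩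
    rw [List.append_assoc] at hroot
    rcases List.map_eq_append_iff.mp hroot with ⟨f₁, f₂₃, rfl, hf₁, hf₂₃⟩
    rcases List.map_eq_append_iff.mp hf₂₃ with ⟨f₂, f₃, rfl, hf₂, hf₃⟩
    refine ⟨f₁ ++ [PT.node r.input f₂] ++ f₃, ?_, ?_, ?_⟩
    · simp [hf₁, hf₃, root]
    · intro t ht
      simp only [List.mem_append, List.mem_singleton] at ht
      rcases ht with (ht | rfl) | ht
      · exact hwf t (by simp [ht])
      · exact WF.node r hr f₂ hf₂ (fun t ht => hwf t (by simp [ht]))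
      · exact hwf t (by simp [ht])
    · rw [yields_append, yields_append] at hyield ⊢
      simpa [yields, yield] using hyield


section Ctx
variable {N : Type uN}

/-- A one-hole context: a list of frames. -/
abbrev Ctx (T : Type uT) (N : Type uN) := List (N × List (PT T N) × List (PT T N))

def plug : Ctx T N → PT T N → PT T N
  | [], s => s
  | ⟨n, l, r⟩ :: k, s => .node n (l ++ plug k s :: r)

lemma plug_append (k₁ k₂ : Ctx T N) (s : PT T N) :
    plug (k₁ ++ k₂) s = plug k₁ (plug k₂ s) := by
  induction k₁ with
  | nil => rfl
  | cons fr k ih => obtain ⟨n, l, r⟩ := fr; simp [plug, ih]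

lemma root_plug_congr {k : Ctx T N} {s s' : PT T N} (h : root s' = root s) :
    root (plug k s') = root (plug k s) := by
  cases k with
  | nil => exact h
  | cons fr k => obtain ⟨n, l, r⟩ := fr; rfl

def pre : Ctx T N → List (Symbol T N)
  | [] => []
  | ⟨_, l, _⟩ :: k => yields l ++ pre k

def post : Ctx T N → List (Symbol T N)
  | [] => []
  | ⟨_, _, r⟩ :: k => post k ++ yields r

lemma yield_plug (k : Ctx T N) (s : PT T N) :
    yield (plug k s) = pre k ++ yield s ++ post k := by
  induction k with
  | nil => simp [plug, pre, post]
  | cons fr k ih =>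
    obtain ⟨n, l, r⟩ := fr
    show yields (l ++ plug k s :: r) = _
    rw [yields_append]
    show yields l ++ (yield (plug k s) ++ yields r) = _
    rw [ih]; simp [pre, post]

def csize : Ctx T N → ℕ
  | [] => 0
  | ⟨_, l, r⟩ :: k => sizes l + sizes r + 1 + csize k

lemma size_plug (k : Ctx T N) (s : PT T N) :
    size (plug k s) = csize k + size s := by
  induction k with
  | nil => simp [plug, csize]
  | cons fr k ih =>
    obtain ⟨n, l, r⟩ := fr
    show sizes (l ++ plug k s :: r) + 1 = _
    rw [sizes_append]
    show sizes l + (size (plug k s) + sizes r) + 1 = _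
    rw [ih]; simp [csize]; ring

lemma csize_pos {k : Ctx T N} (h : k ≠ []) : 1 ≤ csize k := by
  cases k with
  | nil => exact absurd rfl h
  | cons fr k => obtain ⟨n, l, r⟩ := fr; simp [csize]; omega

end Ctx

variable {g : ContextFreeGrammar.{uT} T}

lemma WF.of_plug {k : Ctx T g.NT} {s : PT T g.NT} (h : WF g (plug k s)) : WF g s := by
  induction k with
  | nil => exact h
  | cons fr k ih =>
    obtain ⟨n, l, r⟩ := fr
    cases h with
    | node rr hr c hc hwf =>
      exact ih (hwf _ (by simp))

lemma WF.plug_congr {k : Ctx T g.NT} {s s' : PT T g.NT}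
    (h : WF g (plug k s)) (h' : WF g s') (hroot : root s' = root s) : WF g (plug k s') := by
  induction k with
  | nil => exact h'
  | cons fr k ih =>
    obtain ⟨n, l, r⟩ := fr
    cases h with
    | node rr hr c hc hwf =>
      refine WF.node rr hr _ ?_ ?_
      · rw [← hc]; simp only [List.map_append, List.map_cons]
        rw [root_plug_congr (s := s) (s' := s') hroot]
      · intro t ht
        simp only [List.mem_append, List.mem_cons] at ht
        rcases ht with ht | rfl | ht
        · exact hwf _ (by simp [ht])
        · exact ih (hwf _ (by simp))
        · exact hwf _ (by simp [ht])

lemma derives_plug {k : Ctx T g.NT} {s : PT T g.NT} (h : WF g (plug k s)) :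
    g.Derives [root (plug k s)] (pre k ++ [root s] ++ post k) := by
  induction k with
  | nil => simp only [plug, pre, post, List.nil_append, List.append_nil]
           exact ContextFreeGrammar.Derives.refl _
  | cons fr k ih =>
    obtain ⟨n, l, r⟩ := fr
    cases h with
    | node rr hr c hc hwf =>
      have step : g.Produces [Symbol.nonterminal rr.input] rr.output :=
        ⟨rr, hr, ContextFreeRule.Rewrites.input_output⟩
      rw [← hc] at step
      have hl : g.Derives (l.map root) (yields l) :=
        derives_yields l (fun t ht => (hwf t (by simp [ht])).derives)
      have hr' : g.Derives (r.map root) (yields r) :=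
        derives_yields r (fun t ht => (hwf t (by simp [ht])).derives)
      have hmid : g.Derives [root (plug k s)] (pre k ++ [root s] ++ post k) :=
        ih (hwf _ (by simp))
      show g.Derives [Symbol.nonterminal rr.input] ((yields l ++ pre k) ++ [root s] ++ (post k ++ yields r))
      refine step.trans_derives ?_
      have e : (l ++ plug k s :: r).map root
          = l.map root ++ [root (plug k s)] ++ r.map root := by simp
      rw [e]
      have d1 : g.Derives (l.map root ++ [root (plug k s)] ++ r.map root)
          (yields l ++ [root (plug k s)] ++ r.map root) :=
        ContextFreeGrammar.Derives.append_right (ContextFreeGrammar.Derives.append_right hl _) _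
      have d2 : g.Derives (yields l ++ [root (plug k s)] ++ r.map root)
          (yields l ++ [root (plug k s)] ++ yields r) :=
        ContextFreeGrammar.Derives.append_left hr' _
      have d3 : g.Derives (yields l ++ [root (plug k s)] ++ yields r)
          (yields l ++ (pre k ++ [root s] ++ post k) ++ yields r) := by
        have := ContextFreeGrammar.Derives.append_left hmid (yields l)
        have := ContextFreeGrammar.Derives.append_right this (yields r)
        simpa [List.append_assoc] using this
      refine (d1.trans (d2.trans (d3.trans ?_)))
      simp only [List.append_assoc, List.cons_append, List.singleton_append, List.nil_append]
      exact ContextFreeGrammar.Derives.refl _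


lemma seed_le_foldr_max (l : List ℕ) (seed : ℕ) : seed ≤ l.foldr max seed := by
  induction l with
  | nil => exact le_rfl
  | cons a l ih => exact le_trans ih (le_max_right _ _)

lemma le_foldr_max {l : List ℕ} {a : ℕ} (seed : ℕ) (h : a ∈ l) : a ≤ l.foldr max seed := by
  induction l with
  | nil => cases h
  | cons b l ih =>
    rcases List.mem_cons.mp h with rfl | h
    · exact le_max_left _ _
    · exact le_trans (ih h) (le_max_right _ _)

lemma yields_length {N : Type uN} (c : List (PT T N)) :
    (yields c).length = (c.map (fun t => (yield t).length)).sum := by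
  induction c with
  | nil => rfl
  | cons t ts ih => simp [yields, ih]

variable {g : ContextFreeGrammar.{uT} T}

lemma yield_length_le {m : ℕ} (hm : 1 ≤ m) (hr : ∀ r ∈ g.rules, r.output.length ≤ m)
    {t : PT T g.NT} (h : WF g t) : (yield t).length ≤ m ^ height t := by
  induction h with
  | leaf s => simpa [yield, height] using hm
  | node r hrule c hc hwf ih =>
    show (yields c).length ≤ m ^ (heights c + 1)
    rw [yields_length]
    calc (c.map (fun t => (yield t).length)).sum
        ≤ (c.map (fun t => (yield t).length)).length • (m ^ heights c) := by
          refine List.sum_le_card_nsmul _ _ ?_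
          intro x hx
          rcases List.mem_map.mp hx with ⟨u, hu, rfl⟩
          exact le_trans (ih u hu)
            (Nat.pow_le_pow_right hm (height_le_heights hu))
      _ = c.length * m ^ heights c := by simp [smul_eq_mul]
      _ ≤ m * m ^ heights c := by
          have : c.length = r.output.length := by rw [← hc]; simp
          exact Nat.mul_le_mul_right _ (this ▸ hr r hrule)
      _ = m ^ (heights c + 1) := by ring

/-- A chain of single-frame context decompositions going down a maximal-height path. -/
def ChainOK (g : ContextFreeGrammar.{uT} T) :
    PT T g.NT → List (Ctx T g.NT × g.NT) → PT T g.NT → Prop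
  | t, [], s => t = s
  | t, (k, A) :: l, s => k ≠ [] ∧ root t = Symbol.nonterminal A ∧
      (∃ r ∈ g.rules, r.input = A) ∧
      ∃ t', t = plug k t' ∧ height t = height t' + 1 ∧ ChainOK g t' l s

lemma chainOK_height : ∀ {t : PT T g.NT} {l} {s : PT T g.NT},
    ChainOK g t l s → height t = l.length + height s
  | t, [], s, h => by rw [show t = s from h]; simp
  | t, (k, A) :: l, s, h => by
    obtain ⟨-, -, -, t', rfl, hh, hch⟩ := h
    have := chainOK_height hch
    simp [hh, this]; omega

lemma chainOK_append : ∀ {t : PT T g.NT} {l₁ l₂} {s : PT T g.NT},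
    ChainOK g t (l₁ ++ l₂) s → ∃ u, ChainOK g t l₁ u ∧ ChainOK g u l₂ s := by
  intro t l₁ l₂ s
  induction l₁ generalizing t with
  | nil => intro h; exact ⟨t, rfl, h⟩
  | cons e l ih =>
    intro h
    obtain ⟨k, A⟩ := e
    obtain ⟨hk, hroot, hrule, t', rfl, hh, hch⟩ := h
    obtain ⟨u, hu1, hu2⟩ := ih hch
    exact ⟨u, ⟨hk, hroot, hrule, t', rfl, hh, hu1⟩, hu2⟩

lemma chainOK_plug : ∀ {t : PT T g.NT} {l} {s : PT T g.NT},
    ChainOK g t l s → ∃ k : Ctx T g.NT, t = plug k s ∧ (l ≠ [] → k ≠ []) := by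
  intro t l s
  induction l generalizing t with
  | nil => intro h; exact ⟨[], h, fun hl => absurd rfl hl⟩
  | cons e l ih =>
    intro h
    obtain ⟨k, A⟩ := e
    obtain ⟨hk, hroot, hrule, t', rfl, hh, hch⟩ := h
    obtain ⟨k', hk', -⟩ := ih hch
    refine ⟨k ++ k', by rw [plug_append, hk'], fun _ => ?_⟩
    intro hcontra
    exact hk (List.append_eq_nil_iff.mp hcontra).1

lemma chainOK_inputs : ∀ {t : PT T g.NT} {l} {s : PT T g.NT},
    ChainOK g t l s → ∀ p ∈ l, ∃ r ∈ g.rules, r.input = p.2 := by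
  intro t l s
  induction l generalizing t with
  | nil => intro h p hp; cases hp
  | cons e l ih =>
    intro h p hp
    obtain ⟨k, A⟩ := e
    obtain ⟨hk, hroot, hrule, t', rfl, hh, hch⟩ := h
    rcases List.mem_cons.mp hp with rfl | hp
    · exact hrule
    · exact ih hch p hp

lemma chain_exists : ∀ (h : ℕ) (t : PT T g.NT), height t ≤ h → WF g t →
    ∃ l s, ChainOK g t l s ∧ height s ≤ 1 := by
  intro h
  induction h with
  | zero => exact fun t ht _ => ⟨[], t, rfl, le_trans ht (by omega)⟩
  | succ h ih =>
    intro t ht hwf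
    by_cases h1 : height t ≤ 1
    · exact ⟨[], t, rfl, h1⟩
    · push_neg at h1
      cases t with
      | leaf s => simp [height] at h1
      | node n c =>
        have hhc : heights c + 1 = height (PT.node n c) := rfl
        have hc1 : 1 ≤ heights c := by
          have := h1; rw [← hhc] at this; omega
        rcases exists_heights c with h0 | ⟨t', ht', hht'⟩
        · omega
        · obtain ⟨c₁, c₂, rfl⟩ := List.append_of_mem ht'
          cases hwf with
          | node r hrule _ hc hwfc =>
            have hwft' : WF g t' := hwfc t' ht'
            have hle : height t' ≤ h := by
              rw [hht']; rw [← hhc] at ht; omega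
            obtain ⟨l, s, hch, hs⟩ := ih t' hle hwft'
            refine ⟨([(r.input, c₁, c₂)], r.input) :: l, s,
              ⟨by simp, rfl, ⟨r, hrule, rfl⟩, t', rfl, ?_, hch⟩, hs⟩
            rw [← hhc, hht']


lemma dup_split {α : Type*} {a : α} : ∀ {m : List α}, List.Sublist [a, a] m →
    ∃ m₁ m₂ m₃, m = m₁ ++ a :: m₂ ++ a :: m₃ := by
  intro m h
  obtain ⟨r₁, r₂, rfl, ha1, h2⟩ := List.cons_sublist_iff.mp h
  obtain ⟨p₁, q₁, rfl⟩ := List.append_of_mem ha1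
  obtain ⟨p₂, q₂, rfl⟩ := List.append_of_mem (List.singleton_sublist.mp h2)
  exact ⟨p₁, q₁ ++ p₂, q₂, by simp⟩

lemma exists_dup {α : Type*} [DecidableEq α] {m L : List α}
    (hsub : ∀ x ∈ m, x ∈ L) (hlen : L.dedup.length < m.length) :
    ∃ m₁ a m₂ m₃, m = m₁ ++ a :: m₂ ++ a :: m₃ := by
  have hnd : ¬ m.Nodup := by
    intro hnd
    have h1 : m.toFinset.card = m.length := by
      rw [List.card_toFinset, hnd.dedup]
    have h2 : m.toFinset ⊆ L.toFinset := by
      intro x hx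
      exact List.mem_toFinset.mpr (hsub x (List.mem_toFinset.mp hx))
    have := Finset.card_le_card h2
    rw [h1, List.card_toFinset] at this
    omega
  rw [List.nodup_iff_sublist] at hnd
  push_neg at hnd
  obtain ⟨a, ha⟩ := hnd
  obtain ⟨m₁, m₂, m₃, rfl⟩ := dup_split ha
  exact ⟨m₁, a, m₂, m₃, rfl⟩

lemma flatten_replicate_succ' {α : Type*} (n : ℕ) (l : List α) :
    (List.replicate (n + 1) l).flatten = (List.replicate n l).flatten ++ l := by
  rw [List.replicate_succ', List.flatten_append]; simp

variable {g : ContextFreeGrammar.{uT} T}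

lemma derives_pump {A₂ : g.NT} {P Q : List (Symbol T g.NT)}
    (h : g.Derives [Symbol.nonterminal A₂] (P ++ [Symbol.nonterminal A₂] ++ Q)) :
    ∀ i : ℕ, g.Derives [Symbol.nonterminal A₂]
      ((List.replicate i P).flatten ++ [Symbol.nonterminal A₂] ++ (List.replicate i Q).flatten) := by
  intro i
  induction i with
  | zero => simpa using ContextFreeGrammar.Derives.refl _
  | succ i ih =>
    refine h.trans ?_
    have := ContextFreeGrammar.Derives.append_left
      (ContextFreeGrammar.Derives.append_right ih Q) P
    rw [List.replicate_succ, List.flatten_cons, flatten_replicate_succ']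
    simpa [List.append_assoc] using this

theorem cfg_pumping (g : ContextFreeGrammar.{uT} T) :
    ∃ C : ℕ, 0 < C ∧ ∀ z ∈ g.language, C ≤ z.length →
      ∃ u v w x y : List T,
        z = u ++ v ++ w ++ x ++ y ∧ v ++ x ≠ [] ∧ (v ++ w ++ x).length ≤ C ∧
        ∀ i : ℕ, u ++ (List.replicate i v).flatten ++ w ++ (List.replicate i x).flatten ++ y
          ∈ g.language := by
  classical
  set inputs : List g.NT := g.rules.toList.map (·.input) with hinputs
  set D : ℕ := inputs.dedup.length with hD
  set m : ℕ := (g.rules.toList.map (·.output.length)).foldr max 1 with hm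
  have hm1 : 1 ≤ m := seed_le_foldr_max _ _
  have hmr : ∀ r ∈ g.rules, r.output.length ≤ m := by
    intro r hr
    exact le_foldr_max 1 (List.mem_map.mpr ⟨r, (g.rules.mem_toList).mpr hr, rfl⟩)
  refine ⟨m ^ (D + 2) + 1, by positivity, ?_⟩
  intro z hz hlen
  -- get a minimal-size parse tree for z
  rw [ContextFreeGrammar.mem_language_iff] at hz
  obtain ⟨f, hfroot, hfwf, hfyield⟩ := exists_forest hz
  have hex : ∃ nn, ∃ t : PT T g.NT, WF g t ∧ root t = Symbol.nonterminal g.initial ∧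
      yield t = z.map Symbol.terminal ∧ size t = nn := by
    rcases f with _ | ⟨t₀, f⟩
    · simp at hfroot
    · rcases f with _ | ⟨t₁, f⟩
      · refine ⟨size t₀, t₀, hfwf t₀ (by simp), ?_, ?_, rfl⟩
        · simpa using hfroot
        · simpa [yields] using hfyield
      · simp at hfroot
  obtain ⟨t, hwft, hroott, hyieldt, hsizet⟩ := Nat.find_spec hex
  have hmin : ∀ t' : PT T g.NT, WF g t' → root t' = Symbol.nonterminal g.initial →
      yield t' = z.map Symbol.terminal → Nat.find hex ≤ size t' := by
    intro t' h1 h2 h3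
    exact Nat.find_min' hex ⟨t', h1, h2, h3, rfl⟩
  -- the tree is tall
  have hylen : (yield t).length = z.length := by rw [hyieldt]; simp
  have hht : D + 2 ≤ height t := by
    by_contra hcon
    push_neg at hcon
    have h1 : (yield t).length ≤ m ^ height t := yield_length_le hm1 hmr hwft
    have h2 : m ^ height t ≤ m ^ (D + 1) :=
      Nat.pow_le_pow_right hm1 (by omega)
    have h3 : m ^ (D + 1) ≤ m ^ (D + 2) := Nat.pow_le_pow_right hm1 (by omega)
    omega
  -- chain down a maximal path
  obtain ⟨l, s, hchain, hs1⟩ := chain_exists (height t) t le_rfl hwft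
  have hlth : height t = l.length + height s := chainOK_height hchain
  have hllen : D + 1 ≤ l.length := by omega
  -- bottom part of the chain
  have hsplit : l = l.take (l.length - (D + 1)) ++ l.drop (l.length - (D + 1)) :=
    (List.take_append_drop _ _).symm
  have hlblen : (l.drop (l.length - (D + 1))).length = D + 1 := by
    rw [List.length_drop]; omega
  rw [hsplit] at hchain
  obtain ⟨u0, hch1, hch2⟩ := chainOK_append hchain
  -- pigeonhole on the labels of the bottom part
  have hdups : ∃ m₁ a m₂ m₃,
      (l.drop (l.length - (D + 1))).map Prod.snd = m₁ ++ a :: m₂ ++ a :: m₃ := by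
    refine exists_dup (L := inputs) ?_ ?_
    · intro xx hxx
      rcases List.mem_map.mp hxx with ⟨p, hp, rfl⟩
      obtain ⟨r, hr, hri⟩ := chainOK_inputs hch2 p hp
      exact List.mem_map.mpr ⟨r, (g.rules.mem_toList).mpr hr, hri⟩
    · rw [List.length_map, hlblen]; omega
  obtain ⟨m₁, A, m₂, m₃, hdup⟩ := hdups
  rw [show m₁ ++ A :: m₂ ++ A :: m₃ = m₁ ++ (A :: (m₂ ++ A :: m₃)) by simp] at hdup
  obtain ⟨lb₁, rest, hlbeq, hmap1, hmap2⟩ := List.map_eq_append_iff.mp hdup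
  obtain ⟨e₂, rest₂, rfl, he₂, hmap3⟩ := List.map_eq_cons_iff.mp hmap2
  obtain ⟨lb₂, rest₃, rfl, hmap4, hmap5⟩ := List.map_eq_append_iff.mp hmap3
  obtain ⟨e₃, lb₃, rfl, he₃, hmap6⟩ := List.map_eq_cons_iff.mp hmap5
  rw [hlbeq] at hch2 hlblen
  -- split the bottom chain at the two occurrences
  obtain ⟨u₁, hcu1, hc3⟩ := chainOK_append hch2
  obtain ⟨k₂, A₂⟩ := e₂
  obtain ⟨k₃, A₃⟩ := e₃
  have hAA : A₃ = A₂ := by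
    have h1 : A₂ = A := he₂
    have h2 : A₃ = A := he₃
    rw [h1, h2]
  have hhu₁eq := chainOK_height hc3
  obtain ⟨hk₂ne, hrootu₁, -, t', hu₁eq, -, hch4⟩ := hc3
  obtain ⟨u₂, hcu2, hc5⟩ := chainOK_append hch4
  have hrootu₂ : root u₂ = Symbol.nonterminal A₂ := by
    have := hc5.2.1
    rwa [hAA] at this
  -- contexts
  obtain ⟨kmid, hkmid, -⟩ := chainOK_plug hcu2
  obtain ⟨ka, hka, -⟩ := chainOK_plug hch1
  obtain ⟨kb, hkb, -⟩ := chainOK_plug hcu1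
  have hplugKin : u₁ = plug (k₂ ++ kmid) u₂ := by
    rw [plug_append, ← hkmid, ← hu₁eq]
  have hKinne : (k₂ ++ kmid) ≠ [] := by
    intro hc; exact hk₂ne (List.append_eq_nil_iff.mp hc).1
  have hplugKout : t = plug (ka ++ kb) u₁ := by
    rw [plug_append, ← hkb, ← hka]
  set Kin : Ctx T g.NT := k₂ ++ kmid
  set Kout : Ctx T g.NT := ka ++ kb
  -- height bound for u₁
  have hhu₁ : height u₁ ≤ D + 2 := by
    have hlen2 : ((k₂, A₂) :: (lb₂ ++ (k₃, A₃) :: lb₃)).length ≤ D + 1 := by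
      have : lb₁.length + ((k₂, A₂) :: (lb₂ ++ (k₃, A₃) :: lb₃)).length = D + 1 := by
        simpa using hlblen
      omega
    omega
  -- well-formedness
  have hwfKout : WF g (plug Kout u₁) := hplugKout ▸ hwft
  have hwfu₁ : WF g u₁ := hwfKout.of_plug
  have hwfKin : WF g (plug Kin u₂) := hplugKin ▸ hwfu₁
  have hwfu₂ : WF g u₂ := hwfKin.of_plug
  -- yields
  have y1 : yield u₁ = pre Kin ++ yield u₂ ++ post Kin := by
    rw [hplugKin, yield_plug]
  have ytt : z.map Symbol.terminal
      = pre Kout ++ (pre Kin ++ (yield u₂ ++ (post Kin ++ post Kout))) := by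
    rw [← hyieldt, hplugKout, yield_plug, y1]; simp [List.append_assoc]
  -- extract the terminal pieces
  obtain ⟨U, rest, rfl, hU, hrest⟩ := List.map_eq_append_iff.mp ytt
  obtain ⟨V, rest2, rfl, hV, hrest2⟩ := List.map_eq_append_iff.mp hrest
  obtain ⟨W, rest3, rfl, hW, hrest3⟩ := List.map_eq_append_iff.mp hrest2
  obtain ⟨X, Y, rfl, hX, hY⟩ := List.map_eq_append_iff.mp hrest3
  refine ⟨U, V, W, X, Y, by simp [List.append_assoc], ?_, ?_, ?_⟩
  · -- nonemptiness via minimality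
    intro hVX
    obtain ⟨hVnil, hXnil⟩ := List.append_eq_nil_iff.mp hVX
    subst hVnil; subst hXnil
    have hpreKin : pre Kin = [] := by simpa using hV.symm
    have hpostKin : post Kin = [] := by simpa using hX.symm
    have hyields : yield u₁ = yield u₂ := by rw [y1, hpreKin, hpostKin]; simp
    have hroots : root u₂ = root u₁ := by rw [hrootu₂, hrootu₁]
    have hwf' : WF g (plug Kout u₂) := hwfKout.plug_congr hwfu₂ hroots
    have hroot' : root (plug Kout u₂) = Symbol.nonterminal g.initial := by
      rw [root_plug_congr hroots, ← hplugKout, hroott]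
    have hyield' : yield (plug Kout u₂) = yield t := by
      rw [yield_plug, ← hyields, ← yield_plug, ← hplugKout]
    have hge := hmin _ hwf' hroot' (hyield'.trans hyieldt)
    have e1 : size (plug Kout u₂) = csize Kout + size u₂ := size_plug _ _
    have e2 : size t = csize Kout + (csize Kin + size u₂) := by
      rw [hplugKout, size_plug, hplugKin, size_plug]
    have e3 : 1 ≤ csize Kin := csize_pos hKinne
    omega
  · -- length bound
    have hlen1 : (yield u₁).length ≤ m ^ (D + 2) :=
      le_trans (yield_length_le hm1 hmr hwfu₁) (Nat.pow_le_pow_right hm1 hhu₁)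
    have hll : (yield u₁).length = V.length + W.length + X.length := by
      rw [y1, ← hV, ← hW, ← hX]; simp; omega
    simp only [List.length_append]
    omega
  · -- pumping
    intro i
    rw [ContextFreeGrammar.mem_language_iff]
    have d1 : g.Derives [Symbol.nonterminal g.initial]
        (pre Kout ++ [Symbol.nonterminal A₂] ++ post Kout) := by
      have := derives_plug hwfKout
      rwa [← hplugKout, hroott, hrootu₁] at this
    have d2 : g.Derives [Symbol.nonterminal A₂]
        (pre Kin ++ [Symbol.nonterminal A₂] ++ post Kin) := by
      have := derives_plug hwfKin
      have hr2 : root (plug Kin u₂) = Symbol.nonterminal A₂ := by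
        rw [← hplugKin, hrootu₁]
      rwa [hr2, hrootu₂] at this
    have d3 : g.Derives [Symbol.nonterminal A₂] (yield u₂) := by
      have := hwfu₂.derives
      rwa [hrootu₂] at this
    have diter := derives_pump d2 i
    have dmid : g.Derives
        ((List.replicate i (pre Kin)).flatten ++ [Symbol.nonterminal A₂]
          ++ (List.replicate i (post Kin)).flatten)
        ((List.replicate i (pre Kin)).flatten ++ yield u₂
          ++ (List.replicate i (post Kin)).flatten) :=
      ContextFreeGrammar.Derives.append_right
        (ContextFreeGrammar.Derives.append_left d3 _) _
    have dtot := d1.trans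
      (ContextFreeGrammar.Derives.append_right
        (ContextFreeGrammar.Derives.append_left (diter.trans dmid) (pre Kout)) (post Kout))
    have hfinal : (U ++ (List.replicate i V).flatten ++ W ++ (List.replicate i X).flatten
        ++ Y).map Symbol.terminal
        = pre Kout ++ ((List.replicate i (pre Kin)).flatten ++ yield u₂
          ++ (List.replicate i (post Kin)).flatten) ++ post Kout := by
      simp only [List.map_append, List.map_flatten, List.map_replicate, hU, hV, hW, hX, hY,
        List.append_assoc]
    rw [hfinal]
    exact dtot

end CFP
section ShuffleDyckPart

lemma count_drop_le {α : Type} [BEq α] (c : α) (P Q : List α) (hQ : Q.count c = 0)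
    (j : ℕ) : ((P ++ Q).drop j).count c ≤ P.length - j := by
  rw [List.drop_append, List.count_append]
  have h1 : ((P.drop j).count c) ≤ P.length - j := by
    have := List.count_le_length (a := c) (l := P.drop j)
    simpa using this
  have h2 : ((Q.drop (j - P.length)).count c) ≤ Q.count c :=
    (List.drop_sublist _ _).count_le c
  omega

lemma count_take_le {α : Type} [BEq α] (c : α) (P Q : List α) (hP : P.count c = 0)
    (i : ℕ) : ((P ++ Q).take i).count c ≤ i - P.length := by
  rw [List.take_append, List.count_append]
  have h1 : ((P.take i).count c) ≤ P.count c := (List.take_sublist _ _).count_le c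
  have h2 : ((Q.take (i - P.length)).count c) ≤ i - P.length := by
    have := List.count_le_length (a := c) (l := Q.take (i - P.length))
    have := List.length_take (i := i - P.length) (l := Q)
    omega
  omega

/-- The `2k`-symbol bracket alphabet is `Fin k × Bool`: `(κ, true)` is the opening
bracket `(_κ` and `(κ, false)` is the closing bracket `)_κ`. `k`-Shuffle Dyck consists
of all words `w` such that for every bracket type `κ`, `w` contains equally many `(_κ`
and `)_κ`, and every prefix of `w` contains at least as many `(_κ` as `)_κ`. -/
def ShuffleDyck (k : ℕ) : Language (Fin k × Bool) :=
  {w | ∀ κ : Fin k, w.count (κ, true) = w.count (κ, false) ∧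
    ∀ p : List (Fin k × Bool), p <+: w → p.count (κ, false) ≤ p.count (κ, true)}

theorem shuffleDyck_not_contextFree (k : ℕ) (hk : 2 ≤ k) :
    ¬ (ShuffleDyck k).IsContextFree := by
  rintro ⟨g, hg⟩
  obtain ⟨C, hCpos, hpump⟩ := CFP.cfg_pumping g
  set n := C with hn
  set κ₀ : Fin k := ⟨0, by omega⟩ with hκ₀
  set κ₁ : Fin k := ⟨1, by omega⟩ with hκ₁
  have hne01 : κ₀ ≠ κ₁ := by
    intro h
    have := congrArg Fin.val h
    simp [hκ₀, hκ₁] at this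
  set a : Fin k × Bool := (κ₀, true) with ha
  set bb : Fin k × Bool := (κ₁, true) with hbb
  set A : Fin k × Bool := (κ₀, false) with hA
  set B : Fin k × Bool := (κ₁, false) with hB
  set z : List (Fin k × Bool) :=
    List.replicate n a ++ List.replicate n bb ++ List.replicate n A ++ List.replicate n B
    with hzdef
  -- z is in the language
  have hzSD : z ∈ ShuffleDyck k := by
    intro κ
    have hcase : (κ₀ = κ ∧ κ₁ ≠ κ) ∨ (κ₁ = κ ∧ κ₀ ≠ κ) ∨ (κ₀ ≠ κ ∧ κ₁ ≠ κ) := by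
      rcases eq_or_ne κ₀ κ with h0 | h0 <;> rcases eq_or_ne κ₁ κ with h1 | h1
      · exact absurd (h0.trans h1.symm) hne01
      · exact Or.inl ⟨h0, h1⟩
      · exact Or.inr (Or.inl ⟨h1, h0⟩)
      · exact Or.inr (Or.inr ⟨h0, h1⟩)
    constructor
    · rcases hcase with ⟨h0, h1⟩ | ⟨h1, h0⟩ | ⟨h0, h1⟩ <;>
        simp [hzdef, List.count_append, List.count_replicate, ha, hbb, hA, hB,
          Prod.ext_iff, h0, h1]
    · intro p hp
      rw [List.prefix_iff_eq_take.mp hp]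
      rcases hcase with ⟨h0, h1⟩ | ⟨h1, h0⟩ | ⟨h0, h1⟩ <;>
        simp [hzdef, List.take_append, List.take_replicate,
          List.count_append, List.count_replicate, List.length_replicate,
          Prod.ext_iff, h0, h1, ha, hbb, hA, hB] <;>
        omega
  have hzmem : z ∈ g.language := by rw [hg]; exact hzSD
  have hzlen : C ≤ z.length := by
    simp only [hzdef, List.length_append, List.length_replicate]
    omega
  obtain ⟨U, V, W, X, Y, hzeq, hVX, hlenVWX, hiter⟩ := hpump z hzmem hzlen
  -- the pumped-down word
  have hz0mem : U ++ W ++ Y ∈ ShuffleDyck k := by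
    have := hiter 0
    simp only [List.replicate_zero, List.flatten_nil, List.append_nil, List.nil_append,
      List.append_assoc] at this
    rw [hg] at this
    simpa [List.append_assoc] using this
  -- balance equations
  have hbal : ∀ κ : Fin k,
      (V ++ X).count (κ, true) = (V ++ X).count (κ, false) := by
    intro κ
    have h1 := (hzSD κ).1
    have h2 := (hz0mem κ).1
    rw [hzeq] at h1
    simp only [List.count_append] at h1 h2 ⊢
    omega
  -- a witness symbol in V ++ X
  obtain ⟨s, hs⟩ := List.exists_mem_of_ne_nil _ hVX
  have hsz : s ∈ z := by
    rw [hzeq]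
    rcases List.mem_append.mp hs with h | h <;> simp [h]
  have hnpos : 0 < n := hCpos
  have hscases : s = a ∨ s = bb ∨ s = A ∨ s = B := by
    simp only [hzdef, List.mem_append, List.mem_replicate] at hsz
    tauto
  -- counting setup
  have hMlen : (V ++ W ++ X).length ≤ n := hlenVWX
  have hdropz : (V ++ W ++ X) ++ Y = z.drop U.length := by
    rw [hzeq]
    rw [show U ++ V ++ W ++ X ++ Y = U ++ ((V ++ W ++ X) ++ Y) by simp [List.append_assoc]]
    rw [List.drop_left]
  have htakez : U ++ (V ++ W ++ X) = z.take (U.length + (V ++ W ++ X).length) := by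
    rw [hzeq]
    rw [show U ++ V ++ W ++ X ++ Y = (U ++ (V ++ W ++ X)) ++ Y by simp [List.append_assoc]]
    rw [List.take_left' (by simp)]
  -- the two pair-contradiction lemmas
  have pair1 : ¬ (1 ≤ (V ++ X).count a ∧ 1 ≤ (V ++ X).count A) := by
    rintro ⟨h1, h2⟩
    have hMa : 1 ≤ ((V ++ W ++ X) ++ Y).count a := by
      simp only [List.count_append] at h1 ⊢; omega
    have hMA : 1 ≤ (U ++ (V ++ W ++ X)).count A := by
      simp only [List.count_append] at h2 ⊢; omega
    have hub1 : ((V ++ W ++ X) ++ Y).count a ≤ n - U.length := by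
      rw [hdropz, show z = List.replicate n a ++
        (List.replicate n bb ++ List.replicate n A ++ List.replicate n B) by
          simp [hzdef, List.append_assoc]]
      have := count_drop_le a (List.replicate n a)
        (List.replicate n bb ++ List.replicate n A ++ List.replicate n B)
        (by simp [List.count_append, List.count_replicate, ha, hbb, hA, hB,
          Prod.ext_iff, hne01, hne01.symm]) U.length
      simpa using this
    have hub2 : (U ++ (V ++ W ++ X)).count A ≤ (U.length + (V ++ W ++ X).length) - (n + n) := by
      rw [htakez, show z = (List.replicate n a ++ List.replicate n bb) ++
        (List.replicate n A ++ List.replicate n B) by simp [hzdef, List.append_assoc]]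
      have := count_take_le A (List.replicate n a ++ List.replicate n bb)
        (List.replicate n A ++ List.replicate n B)
        (by simp [List.count_append, List.count_replicate, ha, hbb, hA, hB, Prod.ext_iff])
        (U.length + (V ++ W ++ X).length)
      simpa using this
    omega
  have pair2 : ¬ (1 ≤ (V ++ X).count bb ∧ 1 ≤ (V ++ X).count B) := by
    rintro ⟨h1, h2⟩
    have hMa : 1 ≤ ((V ++ W ++ X) ++ Y).count bb := by
      simp only [List.count_append] at h1 ⊢; omega
    have hMA : 1 ≤ (U ++ (V ++ W ++ X)).count B := by
      simp only [List.count_append] at h2 ⊢; omega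
    have hub1 : ((V ++ W ++ X) ++ Y).count bb ≤ (n + n) - U.length := by
      rw [hdropz, show z = (List.replicate n a ++ List.replicate n bb) ++
        (List.replicate n A ++ List.replicate n B) by simp [hzdef, List.append_assoc]]
      have := count_drop_le bb (List.replicate n a ++ List.replicate n bb)
        (List.replicate n A ++ List.replicate n B)
        (by simp [List.count_append, List.count_replicate, ha, hbb, hA, hB, Prod.ext_iff, hne01, hne01.symm])
        U.length
      simpa using this
    have hub2 : (U ++ (V ++ W ++ X)).count B
        ≤ (U.length + (V ++ W ++ X).length) - (n + (n + n)) := by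
      rw [htakez, show z = (List.replicate n a ++ List.replicate n bb ++ List.replicate n A) ++
        List.replicate n B by simp [hzdef, List.append_assoc]]
      have := count_take_le B (List.replicate n a ++ List.replicate n bb ++ List.replicate n A)
        (List.replicate n B)
        (by simp [List.count_append, List.count_replicate, ha, hbb, hA, hB, Prod.ext_iff, hne01, hne01.symm])
        (U.length + (V ++ W ++ X).length)
      simpa using this
    omega
  -- finish by cases on the witness symbol
  have hbal0 := hbal κ₀
  have hbal1 := hbal κ₁
  rcases hscases with rfl | rfl | rfl | rfl
  · exact pair1 ⟨List.count_pos_iff.mpr hs, by rw [← hbal0]; exact List.count_pos_iff.mpr hs⟩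
  · exact pair2 ⟨List.count_pos_iff.mpr hs, by rw [← hbal1]; exact List.count_pos_iff.mpr hs⟩
  · exact pair1 ⟨by rw [hbal0]; exact List.count_pos_iff.mpr hs, List.count_pos_iff.mpr hs⟩
  · exact pair2 ⟨by rw [hbal1]; exact List.count_pos_iff.mpr hs, List.count_pos_iff.mpr hs⟩

end ShuffleDyckPart
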